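/- HWI inequality on the two-point space: let μ be Bernoulli(p) on {0,1}, and f : {0,1} → (0,∞) with (1-p)f(0) + pf(1) = 1. Then Ent_μ(f) ≤ p(1-p)(f(1)−f(0))(log f(1)−log f(0)) − (1/2)(T̃₂(μ|fμ) + T̃₂(fμ|μ)). -/

import Mathlib

open Finset

/-- The weak transport cost `T̃₂(ν₁|ν₀) = ∑_x [1 - ν₁(x)/ν₀(x)]₊² ν₀(x)` (Hamming cost). -/
noncomputable def weakT {V : Type*} [Fintype V] (ν₁ ν₀ : V → ℝ) : ℝ :=
  ∑ x, max (1 - ν₁ x / ν₀ x) 0 ^ 2 * ν₀ x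

private lemma hasDerivA (t : ℝ) (ht : t ≠ 0) :
    HasDerivAt (fun s : ℝ => 2*s - 3/2 - s^2/2 - Real.log s) (2 - t - 1/t) t := by
  have h1 : HasDerivAt (fun s : ℝ => 2*s - 3/2 - s^2/2) (2 - t) t := by
    have ha := ((hasDerivAt_id t).const_mul (2:ℝ)).sub_const (3/2)
    have h2 : HasDerivAt (fun s : ℝ => s^2/2) t t := by
      simpa using ((hasDerivAt_pow 2 t).div_const 2)
    simpa [Pi.sub_def] using ha.sub h2
  have h3 := Real.hasDerivAt_log ht
  simpa [one_div, Pi.sub_def] using h1.sub h3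

private lemma hasDerivB (t : ℝ) (ht : t ≠ 0) :
    HasDerivAt (fun s : ℝ => s/2 - 1/(2*s) - Real.log s) (1/2 + 1/(2*t^2) - 1/t) t := by
  have h1 : HasDerivAt (fun s : ℝ => s/2) (1/2) t := by
    simpa using (hasDerivAt_id t).div_const 2
  have h2 : HasDerivAt (fun s : ℝ => 1/(2*s)) (-(1/(2*t^2))) t := by
    have h2t : (2:ℝ)*t ≠ 0 := by simp [ht]
    have := ((hasDerivAt_id t).const_mul (2:ℝ)).inv h2t
    simp only [one_div]
    convert this using 1
    · rfl
    · rfl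
    · funext s; simp
    · simp only [id]; ring
  have h3 := Real.hasDerivAt_log ht
  have := (h1.sub h2).sub h3
  simpa [one_div, sub_neg_eq_add, Pi.sub_def] using this

private lemma logA {y : ℝ} (hy : 0 < y) (hy1 : y ≤ 1) :
    Real.log y ≤ 2*y - 3/2 - y^2/2 := by
  have H : AntitoneOn (fun s : ℝ => 2*s - 3/2 - s^2/2 - Real.log s) (Set.Icc y 1) := by
    apply antitoneOn_of_deriv_nonpos (convex_Icc y 1)
    · apply ContinuousOn.sub (by fun_prop)
      exact Real.continuousOn_log.mono (fun t ht =>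
        Set.mem_compl_singleton_iff.mpr (ne_of_gt (lt_of_lt_of_le hy ht.1)))
    · intro t ht
      rw [interior_Icc] at ht
      exact ((hasDerivA t (ne_of_gt (hy.trans ht.1))).differentiableAt).differentiableWithinAt
    · intro t ht
      rw [interior_Icc] at ht
      have h0 : (0:ℝ) < t := hy.trans ht.1
      rw [(hasDerivA t h0.ne').deriv]
      have he : 2 - t - 1/t = -((t-1)^2/t) := by field_simp; ring
      rw [he]
      exact neg_nonpos.mpr (by positivity)
  have hle := H (Set.left_mem_Icc.mpr hy1) (Set.right_mem_Icc.mpr hy1) hy1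
  simp only [Real.log_one] at hle
  norm_num at hle
  linarith

private lemma logB {y : ℝ} (hy : 1 ≤ y) :
    Real.log y ≤ y/2 - 1/(2*y) := by
  have h0 : (0:ℝ) < 1 := one_pos
  have H : MonotoneOn (fun s : ℝ => s/2 - 1/(2*s) - Real.log s) (Set.Icc 1 y) := by
    apply monotoneOn_of_deriv_nonneg (convex_Icc 1 y)
    · apply ContinuousOn.sub
      · apply ContinuousOn.sub (by fun_prop)
        apply ContinuousOn.div continuousOn_const (by fun_prop)
        intro t ht
        have : (0:ℝ) < t := lt_of_lt_of_le one_pos ht.1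
        positivity
      · exact Real.continuousOn_log.mono (fun t ht =>
          Set.mem_compl_singleton_iff.mpr (ne_of_gt (lt_of_lt_of_le one_pos ht.1)))
    · intro t ht
      rw [interior_Icc] at ht
      have h0t : (0:ℝ) < t := lt_trans one_pos ht.1
      exact ((hasDerivB t h0t.ne').differentiableAt).differentiableWithinAt
    · intro t ht
      rw [interior_Icc] at ht
      have h0t : (0:ℝ) < t := lt_trans one_pos ht.1
      rw [(hasDerivB t h0t.ne').deriv]
      have he : 1/2 + 1/(2*t^2) - 1/t = (t-1)^2/(2*t^2) := by field_simp; ring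
      rw [he]
      positivity
  have hle := H (Set.left_mem_Icc.mpr hy) (Set.right_mem_Icc.mpr hy) hy
  simp only [Real.log_one] at hle
  norm_num at hle
  have hy0 : y ≠ 0 := by linarith
  have heq : y⁻¹*(1/2) = 1/(2*y) := by field_simp
  linarith

private lemma pointwise {y : ℝ} (hy : 0 < y) :
    max (1 - 1/y) 0 ^ 2 * y + max (1 - y) 0 ^ 2 ≤ 2*(y - 1 - Real.log y) := by
  rcases le_total y 1 with h | h
  · have h1 : max (1 - 1/y) 0 = 0 := by
      apply max_eq_right
      have : 1 ≤ 1/y := by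
        rw [le_div_iff₀ hy]; linarith
      linarith
    have h2 : max (1 - y) 0 = 1 - y := max_eq_left (by linarith)
    rw [h1, h2]
    have hA := logA hy h
    nlinarith
  · have h1 : max (1 - 1/y) 0 = 1 - 1/y := by
      apply max_eq_left
      have : 1/y ≤ 1 := by
        rw [div_le_one hy]; linarith
      linarith
    have h2 : max (1 - y) 0 = 0 := max_eq_right (by linarith)
    rw [h1, h2]
    have hB := logB h
    have he : (1 - 1/y)^2 * y = y - 2 + 1/y := by field_simp; ring
    rw [he]
    have h1y : 2*(1/(2*y)) = 1/y := by field_simp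
    linarith

/-- HWI inequality on the two-point space: for `μ = Bernoulli(p)` and a
positive density `f`,
`Ent_μ(f) ≤ p(1-p)(f(1)−f(0))(log f(1)−log f(0)) − ½(T̃₂(μ|fμ) + T̃₂(fμ|μ))`. -/
theorem hwi_two_point (p : ℝ) (hp : 0 < p) (hp' : p < 1)
    (μ : Fin 2 → ℝ) (hμ0 : μ 0 = 1 - p) (hμ1 : μ 1 = p)
    (f : Fin 2 → ℝ) (hf_pos : ∀ x, 0 < f x)
    (hf_sum : ∑ x, f x * μ x = 1) :
    ∑ x, f x * Real.log (f x) * μ x ≤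
      p * (1 - p) * (f 1 - f 0) * (Real.log (f 1) - Real.log (f 0)) -
        (1 / 2) * (weakT μ (fun x => f x * μ x) + weakT (fun x => f x * μ x) μ) := by
  have hq : (0:ℝ) < 1 - p := by linarith
  have ha := hf_pos 0
  have hb := hf_pos 1
  simp only [Fin.sum_univ_two, hμ0, hμ1] at hf_sum
  simp only [weakT, Fin.sum_univ_two, hμ0, hμ1]
  have e1 : (1-p)/(f 0*(1-p)) = 1/(f 0) := by
    rw [div_eq_div_iff (by positivity) (ne_of_gt ha)]; ring
  have e2 : p/(f 1*p) = 1/(f 1) := by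
    rw [div_eq_div_iff (by positivity) (ne_of_gt hb)]; ring
  have e3 : f 0*(1-p)/(1-p) = f 0 := by field_simp
  have e4 : f 1*p/p = f 1 := by field_simp
  rw [e1, e2, e3, e4]
  have P0 := mul_le_mul_of_nonneg_right (pointwise ha) hq.le
  have P1 := mul_le_mul_of_nonneg_right (pointwise hb) hp.le
  have key : f 0 * Real.log (f 0) * (1-p) + f 1 * Real.log (f 1) * p =
      p * (1-p) * (f 1 - f 0) * (Real.log (f 1) - Real.log (f 0))
      + Real.log (f 0) * (1-p) + Real.log (f 1) * p := by
    linear_combination (p * Real.log (f 1) + (1-p) * Real.log (f 0)) * hf_sum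
  nlinarith [P0, P1]
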